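/- Weiss Bridge Theorem: Let G be a torsion abelian group and φ: G → G an endomorphism; let K = Ĝ be the Pontryagin dual and ψ = φ̂: K → K the dual endomorphism. Then h_alg(φ) = h_top(ψ). -/

import Mathlib

noncomputable instance : DivisibleBy (Additive Circle) ℤ :=
  Function.Surjective.divisibleBy (⇑Circle.expHom)
    (fun z => ⟨Complex.arg (Additive.toMul z : Circle), congrArg Additive.ofMul (Circle.exp_arg _)⟩)
    (fun a n => map_zsmul Circle.expHom n a)

theorem Subgroup.exists_monoidHom_circle_extension {G : Type*} [CommGroup G] (T : Subgroup G)
    (χ : T →* Circle) : ∃ χ' : G →* Circle, ∀ t : T, χ' t = χ t := by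
  have baer : Module.Baer ℤ (Additive Circle) := Module.Baer.of_divisible _
  have hinj : Function.Injective (MonoidHom.toAdditive T.subtype) := by
    intro a b h
    exact congrArg Additive.ofMul (T.subtype_injective (congrArg Additive.toMul h))
  obtain ⟨h, hh⟩ := baer.extension_property_addMonoidHom (MonoidHom.toAdditive T.subtype) hinj
    (MonoidHom.toAdditive χ)
  refine ⟨MonoidHom.toAdditive.symm h, fun t => ?_⟩
  exact congrArg Additive.toMul (DFunLike.congr_fun hh (Additive.ofMul t))

theorem card_monoidHom_circle {H : Type*} [CommGroup H] [Finite H] :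
    Nat.card (H →* Circle) = Nat.card H := by
  classical
  have := Fintype.ofFinite (Additive H)
  have e1 : (Multiplicative (Additive H) →* Circle) ≃ (H →* Circle) :=
    MulEquiv.monoidHomCongrLeftEquiv (MulEquiv.multiplicativeAdditive H)
  have e2 : AddChar (Additive H) Circle ≃ (Multiplicative (Additive H) →* Circle) :=
    AddChar.toMonoidHomEquiv
  have e3 : AddChar (Additive H) Circle ≃ AddChar (Additive H) ℂ :=
    AddChar.circleEquivComplex.toEquiv
  have h1 : Nat.card (H →* Circle) = Nat.card (AddChar (Additive H) ℂ) :=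
    Nat.card_congr ((e1.symm.trans e2.symm).trans e3)
  calc Nat.card (H →* Circle) = Nat.card (AddChar (Additive H) ℂ) := h1
    _ = Fintype.card (AddChar (Additive H) ℂ) := Nat.card_eq_fintype_card
    _ = Fintype.card (Additive H) := AddChar.card_eq
    _ = Nat.card (Additive H) := Nat.card_eq_fintype_card.symm
    _ = Nat.card H := Nat.card_congr Additive.toMul

theorem finite_closure_of_torsion {G : Type*} [CommGroup G] (hTor : Monoid.IsTorsion G)
    {S : Set G} (hS : S.Finite) : ((Subgroup.closure S : Subgroup G) : Set G).Finite := by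
  haveI : Finite S := hS.to_subtype
  haveI : Group.FG (Subgroup.closure S) := Group.closure_finite_fg S
  haveI : Finite (Subgroup.closure S) :=
    CommGroup.finite_of_fg_torsion _ (IsTorsion.subgroup hTor (Subgroup.closure S))
  exact Set.toFinite _

section Ann

variable {G : Type*} [CommGroup G] [TopologicalSpace G] [DiscreteTopology G]

/-- Restriction of characters to a subgroup. -/
noncomputable def resHom (T : Subgroup G) : PontryaginDual G →* (T →* Circle) where
  toFun χ := (ContinuousMonoidHom.toMonoidHom χ).comp T.subtype
  map_one' := by ext t; rfl
  map_mul' χ₁ χ₂ := by ext t; rfl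

theorem resHom_surjective (T : Subgroup G) : Function.Surjective (resHom T) := by
  intro χ
  obtain ⟨χ', hχ'⟩ := T.exists_monoidHom_circle_extension χ
  exact ⟨⟨χ', continuous_of_discreteTopology⟩, MonoidHom.ext hχ'⟩

/-- The annihilator of a subgroup. -/
noncomputable def annS (T : Subgroup G) : Subgroup (PontryaginDual G) := (resHom T).ker

theorem mem_annS {T : Subgroup G} {χ : PontryaginDual G} :
    χ ∈ annS T ↔ ∀ g ∈ T, χ g = 1 := by
  simp only [annS, MonoidHom.mem_ker]
  constructor
  · intro h g hg
    exact DFunLike.congr_fun h (⟨g, hg⟩ : T)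
  · intro h
    refine MonoidHom.ext fun t => ?_
    exact h t t.2

theorem annS_index (T : Subgroup G) (hT : (T : Set G).Finite) :
    (annS T).index = Nat.card T := by
  haveI : Finite T := hT.to_subtype
  rw [annS, Subgroup.index_ker, MonoidHom.range_eq_top_of_surjective _ (resHom_surjective T),
    Subgroup.card_top]
  exact card_monoidHom_circle

theorem annS_isClosed (T : Subgroup G) : IsClosed ((annS T : Set (PontryaginDual G))) := by
  have h : (annS T : Set (PontryaginDual G)) = ⋂ (t : T), {χ : PontryaginDual G | χ t = 1} := by
    ext χ
    simp [mem_annS, Set.mem_iInter, Subtype.forall, SetLike.mem_coe]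
  rw [h]
  refine isClosed_iInter fun t => ?_
  have h1 : Continuous fun f : C(G, Circle) => f (t : G) :=
    continuous_eval_const _
  have hc : Continuous fun χ : PontryaginDual G => χ (t : G) :=
    h1.comp (ContinuousMonoidHom.isInducing_toContinuousMap G Circle).continuous
  exact isClosed_singleton.preimage hc

theorem annS_isOpen (T : Subgroup G) (hT : (T : Set G).Finite) :
    IsOpen ((annS T : Set (PontryaginDual G))) := by
  haveI : Finite T := hT.to_subtype
  haveI : (annS T).FiniteIndex :=
    ⟨by rw [annS_index T hT]; exact Nat.card_pos.ne'⟩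
  exact Subgroup.isOpen_of_isClosed_of_finiteIndex _ (annS_isClosed T)

theorem exists_finite_annS_le (hTor : Monoid.IsTorsion G) (U : Subgroup (PontryaginDual G))
    (hU : IsOpen (U : Set (PontryaginDual G))) (hU1 : (1 : PontryaginDual G) ∈ U) :
    ∃ T : Subgroup G, (T : Set G).Finite ∧ annS T ≤ U := by
  obtain ⟨V, hV, hVU⟩ :=
    (ContinuousMonoidHom.isInducing_toContinuousMap G Circle).isOpen_iff.mp hU
  set c : (G → Circle) → C(G, Circle) :=
    fun f => (⟨f, continuous_of_discreteTopology⟩ : C(G, Circle)) with hc_def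
  have hc : Continuous c := by
    refine continuous_generateFrom_iff.mpr ?_
    rintro s ⟨K, hK, W, hW, rfl⟩
    have hKfin : K.Finite := hK.finite_of_discrete
    have hpre : c ⁻¹' {g : C(G, Circle) | Set.MapsTo g K W} =
        ⋂ x ∈ K, (fun f : G → Circle => f x) ⁻¹' W := by
      ext f
      simp [Set.MapsTo, hc_def]
    rw [hpre]
    exact hKfin.isOpen_biInter fun x _ => IsOpen.preimage (continuous_apply x) hW
  have h1V : c (fun _ => 1) ∈ V := by
    have hceq : c (fun _ => 1) = ContinuousMonoidHom.toContinuousMap (1 : PontryaginDual G) :=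
      ContinuousMap.ext fun _ => rfl
    rw [hceq]
    have : (1 : PontryaginDual G) ∈
        ContinuousMonoidHom.toContinuousMap ⁻¹' V := hVU ▸ hU1
    exact this
  obtain ⟨I, u, hI, hpi⟩ := isOpen_pi_iff.mp (IsOpen.preimage hc hV) (fun _ => 1) h1V
  refine ⟨Subgroup.closure (I : Set G), finite_closure_of_torsion hTor I.finite_toSet, ?_⟩
  intro χ hχ
  have hχ' := mem_annS.mp hχ
  have hmem : ⇑χ ∈ (I : Set G).pi u := by
    intro g hg
    have : χ g = 1 := hχ' g (Subgroup.subset_closure hg)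
    rw [this]
    exact (hI g hg).2
  have : c ⇑χ ∈ V := hpi hmem
  have hceq : c ⇑χ = ContinuousMonoidHom.toContinuousMap χ := ContinuousMap.ext fun _ => rfl
  rw [hceq] at this
  have : χ ∈ ContinuousMonoidHom.toContinuousMap ⁻¹' V := this
  rwa [hVU] at this

end Ann


open Filter Topology

section Main

variable {G : Type*} [CommGroup G] [TopologicalSpace G] [DiscreteTopology G]

variable (φ : Monoid.End G) (ψ : Monoid.End (PontryaginDual G))

theorem psi_pow_apply
    (hψ : ψ = (PontryaginDual.map ⟨(φ : G →* G), continuous_of_discreteTopology⟩ :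
      ContinuousMonoidHom (PontryaginDual G) (PontryaginDual G)).toMonoidHom)
    (i : ℕ) (χ : PontryaginDual G) (g : G) :
    ((ψ ^ i : Monoid.End (PontryaginDual G)) χ) g = χ ((φ ^ i : Monoid.End G) g) := by
  induction i generalizing χ with
  | zero => rfl
  | succ i ih =>
    rw [pow_succ, pow_succ']
    have h1 : ((ψ ^ i * ψ) χ) g = ((ψ ^ i : Monoid.End (PontryaginDual G)) (ψ χ)) g := rfl
    rw [h1, ih (ψ χ), hψ]
    rfl

theorem iInf_comap_eq_annS
    (hψ : ψ = (PontryaginDual.map ⟨(φ : G →* G), continuous_of_discreteTopology⟩ :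
      ContinuousMonoidHom (PontryaginDual G) (PontryaginDual G)).toMonoidHom)
    (F : Subgroup G) (n : ℕ) :
    (⨅ i ∈ Finset.range n, (annS F).comap (ψ ^ i : _ →* _) : Subgroup (PontryaginDual G)) =
      annS (⨆ i ∈ Finset.range n, F.map (φ ^ i : G →* G) : Subgroup G) := by
  ext χ
  simp only [Subgroup.mem_iInf, Subgroup.mem_comap, mem_annS, psi_pow_apply φ ψ hψ]
  have hc : ∀ i (χ : PontryaginDual G), χ ∈ (annS F).comap (ψ ^ i : _ →* _) ↔
      ∀ g ∈ F, χ ((φ ^ i : Monoid.End G) g) = 1 := fun i χ =>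
    Subgroup.mem_comap.trans (mem_annS.trans
      (forall₂_congr fun g _ => Eq.congr_left (psi_pow_apply φ ψ hψ i χ g)))
  constructor
  · intro h g hg
    have hle : (⨆ i ∈ Finset.range n, F.map (φ ^ i : G →* G) : Subgroup G) ≤
        MonoidHom.ker (ContinuousMonoidHom.toMonoidHom χ) := by
      refine iSup₂_le fun i hi => ?_
      rintro x hx
      obtain ⟨y, hy, rfl⟩ := (Subgroup.mem_map (f := (φ ^ i : G →* G))).mp hx
      exact (hc i χ).mp (h i hi) y hy
    exact hle hg
  · intro h i hi
    refine (hc i χ).mpr fun g hg => ?_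
    refine h _ ?_
    have hmem : (φ ^ i : G →* G) g ∈ F.map (φ ^ i : G →* G) :=
      Subgroup.mem_map_of_mem _ hg
    exact (le_iSup₂ (f := fun (i : ℕ) (_ : i ∈ Finset.range n) =>
      F.map (φ ^ i : G →* G)) i hi) hmem

theorem Tn_finite (hTor : Monoid.IsTorsion G) (F : Subgroup G) (hF : (F : Set G).Finite) (n : ℕ) :
    ((⨆ i ∈ Finset.range n, F.map (φ ^ i : G →* G) : Subgroup G) : Set G).Finite := by
  have hSfin : (⋃ i ∈ Finset.range n, ((φ ^ i : G →* G) '' F)).Finite :=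
    Set.Finite.biUnion (Finset.finite_toSet _) fun i _ => hF.image _
  have hle : (⨆ i ∈ Finset.range n, F.map (φ ^ i : G →* G) : Subgroup G) ≤
      Subgroup.closure (⋃ i ∈ Finset.range n, ((φ ^ i : G →* G) '' F)) := by
    refine iSup₂_le fun i hi => ?_
    intro x hx
    obtain ⟨y, hy, rfl⟩ := (Subgroup.mem_map (f := (φ ^ i : G →* G))).mp hx
    exact Subgroup.subset_closure (Set.mem_biUnion hi (Set.mem_image_of_mem _ hy))
  exact (finite_closure_of_torsion hTor hSfin).subset hle

theorem statement17' (hTor : Monoid.IsTorsion G)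
    (hψ : ψ = (PontryaginDual.map ⟨(φ : G →* G), continuous_of_discreteTopology⟩ :
      ContinuousMonoidHom (PontryaginDual G) (PontryaginDual G)).toMonoidHom)
    (Halg : Subgroup G → ℝ)
    (hHalg : ∀ F : Subgroup G, (F : Set G).Finite →
      Tendsto
        (fun n : ℕ =>
          Real.log (Nat.card (⨆ i ∈ Finset.range n, F.map (φ ^ i : G →* G) : Subgroup G)) / n)
        atTop (𝓝 (Halg F)))
    (Htop : Subgroup (PontryaginDual G) → ℝ)
    (hHtop : ∀ U : Subgroup (PontryaginDual G), IsOpen (U : Set (PontryaginDual G)) →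
      Tendsto
        (fun n : ℕ =>
          Real.log ((⨅ i ∈ Finset.range n, U.comap (ψ ^ i : _ →* _) :
            Subgroup (PontryaginDual G)).index) / n)
        atTop (𝓝 (Htop U))) :
    (⨆ (F : Subgroup G) (_ : (F : Set G).Finite), ENNReal.ofReal (Halg F)) =
      ⨆ (U : Subgroup (PontryaginDual G)) (_ : IsOpen (U : Set (PontryaginDual G))),
        ENNReal.ofReal (Htop U) := by
  have key1 : ∀ F : Subgroup G, (F : Set G).Finite → Halg F = Htop (annS F) := by
    intro F hF
    have h2 := hHtop (annS F) (annS_isOpen F hF)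
    have heq : (fun n : ℕ =>
        Real.log ((⨅ i ∈ Finset.range n, (annS F).comap (ψ ^ i : _ →* _) :
          Subgroup (PontryaginDual G)).index) / n) =
        (fun n : ℕ =>
          Real.log (Nat.card (⨆ i ∈ Finset.range n, F.map (φ ^ i : G →* G) : Subgroup G)) / n) := by
      funext n
      rw [iInf_comap_eq_annS φ ψ hψ, annS_index _ (Tn_finite φ hTor F hF n)]
    rw [heq] at h2
    exact tendsto_nhds_unique (hHalg F hF) h2
  have key2 : ∀ U : Subgroup (PontryaginDual G), IsOpen (U : Set (PontryaginDual G)) →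
      ∃ F : Subgroup G, (F : Set G).Finite ∧ Htop U ≤ Halg F := by
    intro U hU
    obtain ⟨T, hTfin, hTle⟩ := exists_finite_annS_le hTor U hU U.one_mem
    refine ⟨T, hTfin, ?_⟩
    refine le_of_tendsto_of_tendsto (hHtop U hU) (hHalg T hTfin) ?_
    filter_upwards [Filter.eventually_ge_atTop 1] with n hn
    haveI : Finite (⨆ i ∈ Finset.range n, T.map (φ ^ i : G →* G) : Subgroup G) :=
      (Tn_finite φ hTor T hTfin n).to_subtype
    have hmono : (⨅ i ∈ Finset.range n, (annS T).comap (ψ ^ i : _ →* _) :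
        Subgroup (PontryaginDual G)) ≤
        (⨅ i ∈ Finset.range n, U.comap (ψ ^ i : _ →* _)) :=
      iInf_mono fun i => iInf_mono fun hi => Subgroup.comap_mono hTle
    have hdvd := Subgroup.index_dvd_of_le hmono
    rw [iInf_comap_eq_annS φ ψ hψ, annS_index _ (Tn_finite φ hTor T hTfin n)] at hdvd
    have hcard0 : 0 < Nat.card (⨆ i ∈ Finset.range n, T.map (φ ^ i : G →* G) : Subgroup G) :=
      Nat.card_pos
    have hle' := Nat.le_of_dvd hcard0 hdvd
    have hpos : 0 < (⨅ i ∈ Finset.range n, U.comap (ψ ^ i : _ →* _) :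
        Subgroup (PontryaginDual G)).index := by
      rcases Nat.eq_zero_or_pos (⨅ i ∈ Finset.range n, U.comap (ψ ^ i : _ →* _) :
          Subgroup (PontryaginDual G)).index with h0 | h
      · rw [h0] at hdvd
        exact absurd (zero_dvd_iff.mp hdvd) hcard0.ne'
      · exact h
    have hlog : Real.log ((⨅ i ∈ Finset.range n, U.comap (ψ ^ i : _ →* _) :
        Subgroup (PontryaginDual G)).index) ≤
        Real.log (Nat.card (⨆ i ∈ Finset.range n, T.map (φ ^ i : G →* G) : Subgroup G)) :=
      Real.log_le_log (by exact_mod_cast hpos) (by exact_mod_cast hle')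
    have hn' : (0 : ℝ) < n := by exact_mod_cast hn
    exact div_le_div_of_nonneg_right hlog hn'.le
  apply le_antisymm
  · refine iSup₂_le fun F hF => ?_
    rw [key1 F hF]
    exact le_iSup₂_of_le (annS F) (annS_isOpen F hF) le_rfl
  · refine iSup₂_le fun U hU => ?_
    obtain ⟨F, hF, hle⟩ := key2 U hU
    exact le_iSup₂_of_le F hF (ENNReal.ofReal_le_ofReal hle)

end Main

/-- Weiss Bridge Theorem: `G` a (discrete) torsion abelian group,
`φ : G → G` an endomorphism, `K = Ĝ` the Pontryagin dual, `ψ = φ̂` the dual endomorphism.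
Then `h_alg(φ) = h_top(ψ)`, where `h_alg(φ)` is the sup over finite subgroups `F` of
`H_alg(φ,F) = lim_n log|T_n(φ,F)|/n` and `h_top(ψ)` is the sup over open subgroups `U` of
`H_top(ψ,U) = lim_n log[K : C_n(ψ,U)]/n`. -/
theorem statement17 {G : Type*} [CommGroup G] [TopologicalSpace G] [DiscreteTopology G]
    (hTor : Monoid.IsTorsion G)
    (φ : Monoid.End G)
    (ψ : Monoid.End (PontryaginDual G))
    (hψ : ψ = (PontryaginDual.map ⟨(φ : G →* G), continuous_of_discreteTopology⟩ :
      ContinuousMonoidHom (PontryaginDual G) (PontryaginDual G)).toMonoidHom)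
    (Halg : Subgroup G → ℝ)
    (hHalg : ∀ F : Subgroup G, (F : Set G).Finite →
      Tendsto
        (fun n : ℕ =>
          Real.log (Nat.card (⨆ i ∈ Finset.range n, F.map (φ ^ i : G →* G) : Subgroup G)) / n)
        atTop (𝓝 (Halg F)))
    (Htop : Subgroup (PontryaginDual G) → ℝ)
    (hHtop : ∀ U : Subgroup (PontryaginDual G), IsOpen (U : Set (PontryaginDual G)) →
      Tendsto
        (fun n : ℕ =>
          Real.log ((⨅ i ∈ Finset.range n, U.comap (ψ ^ i : _ →* _) :
            Subgroup (PontryaginDual G)).index) / n)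
        atTop (𝓝 (Htop U))) :
    (⨆ (F : Subgroup G) (_ : (F : Set G).Finite), ENNReal.ofReal (Halg F)) =
      ⨆ (U : Subgroup (PontryaginDual G)) (_ : IsOpen (U : Set (PontryaginDual G))),
        ENNReal.ofReal (Htop U) :=
  statement17' φ ψ hTor hψ Halg hHalg Htop hHtop
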